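/- If κ < 𝔤 and (G_i)_{i∈I} is a family of groupwise dense subsets of [ω]^ω with |I| = κ, then the intersection ⋂_{i∈I} G_i is groupwise dense. -/
import Mathlib


open Set Cardinal MeasureTheory

/-- The characteristic function of a set of naturals, as a point of Cantor space `2^ω`. -/
noncomputable def chi (x : Set ℕ) : ℕ → Bool := fun n => @decide (n ∈ x) (Classical.dec _)

/-- `[ω]^ω`: the collection of infinite subsets of ω. -/
def InfSets : Set (Set ℕ) := {x : Set ℕ | x.Infinite}

/-- `X ⊆ [ω]^ω` is downward closed for almost-inclusion `x ≤ y ↔ (x \ y).Finite`. -/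
def DownClosed (X : Set (Set ℕ)) : Prop :=
  ∀ y ∈ X, ∀ x : Set ℕ, x.Infinite → (x \ y).Finite → x ∈ X

/-- `X` is meager as a subset of Cantor space `2^ω` (product topology on `ℕ → Bool`). -/
def MeagerSet (X : Set (Set ℕ)) : Prop := IsMeagre (chi '' X)

/-- A partition of ω into consecutive finite intervals `I n = [e n, e (n+1))`. -/
structure IntervalPartition where
  e : ℕ → ℕ
  zero : e 0 = 0
  mono : StrictMono e

/-- The `n`-th interval of an interval partition. -/
def IntervalPartition.I (P : IntervalPartition) (n : ℕ) : Set ℕ :=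
  Set.Ico (P.e n) (P.e (n + 1))

/-- `X ⊆ [ω]^ω` is groupwise dense: downward closed, and for every partition of ω into
finite intervals, the union of some infinitely many of the intervals belongs to `X`. -/
def GroupwiseDense (X : Set (Set ℕ)) : Prop :=
  X ⊆ InfSets ∧ DownClosed X ∧
    ∀ P : IntervalPartition, ∃ A : Set ℕ, A.Infinite ∧ (⋃ n ∈ A, P.I n) ∈ X

/-- `g` eventually majorizes `f`. -/
def EvMaj (f g : ℕ → ℕ) : Prop := ∀ᶠ k in Filter.atTop, f k ≤ g k

/-- `M(Π)`: the infinite subsets of ω including only finitely many intervals of `Π`. -/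
def MSet (P : IntervalPartition) : Set (Set ℕ) :=
  {x : Set ℕ | x.Infinite ∧ {n : ℕ | P.I n ⊆ x}.Finite}

/-- The index `n` of the interval `I n` of `P` containing `k`. -/
def idx (P : IntervalPartition) (k : ℕ) : ℕ := Nat.findGreatest (fun n => P.e n ≤ k) k

/-- `F_Π(k)`: the largest element of `I (n+2)`, where `k ∈ I n`. -/
def FPart (P : IntervalPartition) (k : ℕ) : ℕ := P.e (idx P k + 3) - 1

/-- The groupwise density number 𝔤. -/
noncomputable def gNum : Cardinal :=
  sInf {c : Cardinal | ∃ S : Set (Set (Set ℕ)), (∀ G ∈ S, GroupwiseDense G) ∧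
    #S = c ∧ InfSets ∩ ⋂₀ S = ∅}

/-- The bounding number 𝔟. -/
noncomputable def bNum : Cardinal :=
  sInf {c : Cardinal | ∃ F : Set (ℕ → ℕ), #F = c ∧ ∀ g : ℕ → ℕ, ∃ f ∈ F, ¬ EvMaj f g}

/-- The dominating number 𝔡. -/
noncomputable def dNum : Cardinal :=
  sInf {c : Cardinal | ∃ F : Set (ℕ → ℕ), #F = c ∧ ∀ g : ℕ → ℕ, ∃ f ∈ F, EvMaj g f}

/-- `B_M`: the ideal of meager downward-closed subsets of `[ω]^ω`. -/
def BM : Set (Set (Set ℕ)) := {X : Set (Set ℕ) | X ⊆ InfSets ∧ DownClosed X ∧ MeagerSet X}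

/-- `add(B_M)`. -/
noncomputable def addBM : Cardinal :=
  sInf {c : Cardinal | ∃ S : Set (Set (Set ℕ)), S ⊆ BM ∧ #S = c ∧ ⋃₀ S ∉ BM}

/-- `cov(B_M)`. -/
noncomputable def covBM : Cardinal :=
  sInf {c : Cardinal | ∃ S : Set (Set (Set ℕ)), S ⊆ BM ∧ #S = c ∧
    {x : Set ℕ | x.Infinite ∧ xᶜ.Infinite} ⊆ ⋃₀ S}

/-- `unif(B_M)`. -/
noncomputable def unifBM : Cardinal :=
  sInf {c : Cardinal | ∃ S : Set (Set ℕ), (∀ x ∈ S, x.Infinite ∧ xᶜ.Infinite) ∧ #S = c ∧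
    ∀ X ∈ BM, ¬ S ⊆ X}

/-- `cof(B_M)`. -/
noncomputable def cofBM : Cardinal :=
  sInf {c : Cardinal | ∃ C : Set (Set (Set ℕ)), C ⊆ BM ∧ #C = c ∧
    ∀ X ∈ BM, ∃ Y ∈ C, X ⊆ Y}

/-- `X ⊆ [ω]^ω` is dense: every infinite `A` has an infinite subset `B ∈ X`. -/
def DenseM (X : Set (Set ℕ)) : Prop :=
  ∀ A : Set ℕ, A.Infinite → ∃ B ⊆ A, B.Infinite ∧ B ∈ X

/-- 𝔤′: the least number of non-meager downward-closed ideals on ω with empty intersection. -/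
noncomputable def gNum' : Cardinal :=
  sInf {c : Cardinal | ∃ S : Set (Set (Set ℕ)),
    (∀ X ∈ S, X ⊆ InfSets ∧ DownClosed X ∧ (∀ x ∈ X, ∀ y ∈ X, x ∪ y ∈ X) ∧ ¬ MeagerSet X) ∧
    #S = c ∧ InfSets ∩ ⋂₀ S = ∅}

/-- The splitting number 𝔰. -/
noncomputable def sNum : Cardinal :=
  sInf {c : Cardinal | ∃ S : Set (Set ℕ), #S = c ∧
    ∀ x : Set ℕ, x.Infinite → ∃ y ∈ S, (x ∩ y).Infinite ∧ (x \ y).Infinite}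

lemma IP_le_e (P : IntervalPartition) (n : ℕ) : n ≤ P.e n := P.mono.le_apply

lemma IP_mem_I_self (P : IntervalPartition) (n : ℕ) : P.e n ∈ P.I n :=
  ⟨le_rfl, P.mono (Nat.lt_succ_self n)⟩

lemma biUnion_I_infinite (P : IntervalPartition) {A : Set ℕ} (hA : A.Infinite) :
    (⋃ n ∈ A, P.I n).Infinite := by
  have h : ∀ N : ℕ, ∃ m ∈ ⋃ n ∈ A, P.I n, N < m := by
    intro N
    obtain ⟨n, hn, hNn⟩ := hA.exists_gt N
    exact ⟨P.e n, Set.mem_biUnion hn (IP_mem_I_self P n),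
      lt_of_lt_of_le hNn (IP_le_e P n)⟩
  refine Set.infinite_of_not_bddAbove ?_
  rintro ⟨N, hN⟩
  obtain ⟨m, hm, hNm⟩ := h N
  exact absurd (hN hm) (not_le.mpr hNm)

lemma Ico_biUnion (f : ℕ → ℕ) (hf : Monotone f) (a b : ℕ) (hab : a ≤ b) :
    (⋃ m ∈ Set.Ico a b, Set.Ico (f m) (f (m + 1))) = Set.Ico (f a) (f b) := by
  induction b, hab using Nat.le_induction with
  | base => simp
  | succ b hab ih =>
    have hins : Set.Ico a (b + 1) = insert b (Set.Ico a b) := by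
      ext k; simp only [Set.mem_Ico, Set.mem_insert_iff]; omega
    rw [hins, Set.biUnion_insert, ih, Set.union_comm,
      Set.Ico_union_Ico_eq_Ico (hf hab) (hf (Nat.le_succ b))]

lemma gwdH {G : Set (Set ℕ)} (hG : GroupwiseDense G) (P : IntervalPartition) :
    GroupwiseDense {x : Set ℕ | x.Infinite ∧ (⋃ n ∈ x, P.I n) ∈ G} := by
  obtain ⟨hGI, hGD, hGP⟩ := hG
  refine ⟨fun x hx => hx.1, ?_, ?_⟩
  · rintro y ⟨hyI, hyG⟩ x hxI hxy
    refine ⟨hxI, hGD _ hyG _ (biUnion_I_infinite P hxI) ?_⟩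
    have hsub : (⋃ n ∈ x, P.I n) \ (⋃ n ∈ y, P.I n) ⊆ ⋃ n ∈ x \ y, P.I n := by
      rintro k ⟨hk1, hk2⟩
      simp only [Set.mem_iUnion, exists_prop] at hk1 hk2 ⊢
      obtain ⟨n, hn, hkn⟩ := hk1
      exact ⟨n, ⟨hn, fun hny => hk2 ⟨n, hny, hkn⟩⟩, hkn⟩
    exact (hxy.biUnion (fun n _ => Set.finite_Ico _ _)).subset hsub
  · intro Q
    set R : IntervalPartition :=
      ⟨fun n => P.e (Q.e n), by simp [Q.zero, P.zero], P.mono.comp Q.mono⟩ with hR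
    obtain ⟨A, hAinf, hAG⟩ := hGP R
    refine ⟨A, hAinf, biUnion_I_infinite Q hAinf, ?_⟩
    have hRI : ∀ n, R.I n = ⋃ m ∈ Q.I n, P.I m := by
      intro n
      exact (Ico_biUnion P.e P.mono.monotone (Q.e n) (Q.e (n + 1))
        (Q.mono.monotone (Nat.le_succ n))).symm
    have hkey : (⋃ m ∈ ⋃ n ∈ A, Q.I n, P.I m) = ⋃ n ∈ A, R.I n := by
      simp_rw [hRI]
      ext k
      simp only [Set.mem_iUnion, exists_prop]
      tauto
    rw [hkey]; exact hAG

/-- The intersection of fewer than 𝔤 groupwise dense sets is groupwise dense. -/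
theorem stmt2 (ι : Type) (G : ι → Set (Set ℕ)) (hcard : #ι < gNum)
    (hG : ∀ i, GroupwiseDense (G i)) :
    GroupwiseDense (InfSets ∩ ⋂ i, G i) := by
  refine ⟨Set.inter_subset_left, ?_, ?_⟩
  · rintro y ⟨hyI, hyG⟩ x hxI hxy
    rw [Set.mem_iInter] at hyG
    exact ⟨hxI, Set.mem_iInter.mpr fun i => (hG i).2.1 _ (hyG i) _ hxI hxy⟩
  · intro P
    set S : Set (Set (Set ℕ)) :=
      Set.range (fun i => {x : Set ℕ | x.Infinite ∧ (⋃ n ∈ x, P.I n) ∈ G i}) with hS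
    have hScard : #S ≤ #ι := Cardinal.mk_range_le
    have hne : InfSets ∩ ⋂₀ S ≠ ∅ := by
      intro h
      have hmem : gNum ≤ #S := by
        refine csInf_le' ⟨S, ?_, rfl, h⟩
        rintro T ⟨i, rfl⟩
        exact gwdH (hG i) P
      exact absurd (hmem.trans hScard) (not_le.mpr hcard)
    obtain ⟨x, hx⟩ := Set.nonempty_iff_ne_empty.mpr hne
    have hxH : ∀ i, x.Infinite ∧ (⋃ n ∈ x, P.I n) ∈ G i :=
      fun i => hx.2 _ ⟨i, rfl⟩
    exact ⟨x, hx.1, ⟨biUnion_I_infinite P hx.1,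
      Set.mem_iInter.mpr fun i => (hxH i).2⟩⟩
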